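/- Let D, W, δ satisfy the sl₂ relations [W,D]=2D, [W,δ]=-2δ, [δ,D]=W on a vector space V, let k > 2 be an integer, and suppose F ∈ V satisfies W·F = k·F and δ^m·F = 0 for all m > k/2. Define π_k(F) = Σ_{0 ≤ m ≤ k/2} ((-1)^m / (m!·(k-m-1)_m))·D^m·δ^m·F. Then δ(π_k(F)) = 0. Moreover if δ·F = 0 then π_k(F) = F. -/

import Mathlib

open Finset

/-- Rising factorial `x (x+1) ⋯ (x+n-1)` for complex `x`. -/
noncomputable def risingC (x : ℂ) (n : ℕ) : ℂ := ∏ i ∈ Finset.range n, (x + i)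

/-- coefficient -/
noncomputable def ccoef (k m : ℕ) : ℂ :=
  (-1 : ℂ) ^ m / ((m.factorial : ℂ) * risingC ((k : ℂ) - (m : ℂ) - 1) m)

/-- telescoping function -/
noncomputable def ggfun {V : Type*} [AddCommGroup V] [Module ℂ V]
    (D δ : Module.End ℂ V) (F : V) (k : ℕ) : ℕ → V
  | 0 => 0
  | (j+1) => ccoef k j • (D ^ j) ((δ ^ (j+1)) F)

/-- Let `D, W, δ` satisfy the `sl₂` relations on a vector space `V`, let `k > 2` be an
integer, and suppose `F ∈ V` satisfies `W F = k • F` and `δ^m F = 0` for all `m > k/2`.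
Define `π_k(F) = Σ_{0 ≤ m ≤ k/2} ((-1)^m / (m!·(k-m-1)_m)) • D^m δ^m F`.
Then `δ(π_k(F)) = 0`; moreover if `δ F = 0` then `π_k(F) = F`. -/
theorem statement6 {V : Type*} [AddCommGroup V] [Module ℂ V]
    (D W δ : Module.End ℂ V)
    (h1 : W * D - D * W = 2 * D) (h2 : W * δ - δ * W = -2 * δ) (h3 : δ * D - D * δ = W)
    (k : ℕ) (hk : 2 < k) (F : V) (hW : W F = (k : ℂ) • F)
    (hdepth : ∀ m : ℕ, k < 2 * m → (δ ^ m) F = 0) :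
    δ (∑ m ∈ Finset.range (k / 2 + 1),
        ((-1 : ℂ) ^ m / ((m.factorial : ℂ) * risingC ((k : ℂ) - (m : ℂ) - 1) m)) •
          (D ^ m) ((δ ^ m) F)) = 0
    ∧ (δ F = 0 →
        (∑ m ∈ Finset.range (k / 2 + 1),
          ((-1 : ℂ) ^ m / ((m.factorial : ℂ) * risingC ((k : ℂ) - (m : ℂ) - 1) m)) •
            (D ^ m) ((δ ^ m) F)) = F) := by
  simp only [show ∀ m : ℕ, ((-1 : ℂ) ^ m / ((m.factorial : ℂ) *
      risingC ((k : ℂ) - (m : ℂ) - 1) m)) = ccoef k m from fun _ => rfl]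
  -- pointwise commutation relations
  have hδD : ∀ v : V, δ (D v) = D (δ v) + W v := by
    intro v
    have h := LinearMap.congr_fun h3 v
    simp only [LinearMap.sub_apply, Module.End.mul_apply] at h
    rw [sub_eq_iff_eq_add] at h
    rw [h]; abel
  have hWD : ∀ v : V, W (D v) = D (W v) + (D v + D v) := by
    intro v
    have h := LinearMap.congr_fun h1 v
    rw [two_mul] at h
    simp only [LinearMap.sub_apply, LinearMap.add_apply, Module.End.mul_apply] at h
    rw [sub_eq_iff_eq_add] at h
    rw [h]; abel
  have hWδ : ∀ v : V, W (δ v) = δ (W v) - (δ v + δ v) := by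
    intro v
    have h := LinearMap.congr_fun h2 v
    rw [show ((-2 : Module.End ℂ V) * δ) = -(δ + δ) by rw [neg_mul, two_mul]] at h
    simp only [LinearMap.sub_apply, LinearMap.neg_apply, LinearMap.add_apply,
      Module.End.mul_apply] at h
    rw [sub_eq_iff_eq_add] at h
    rw [h]; abel
  -- weights of δ^n F
  have hWn : ∀ n : ℕ, W ((δ ^ n) F) = ((k : ℂ) - 2 * n) • (δ ^ n) F := by
    intro n
    induction n with
    | zero => simpa using hW
    | succ n ih =>
      have hp : (δ ^ (n + 1)) F = δ ((δ ^ n) F) := by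
        rw [pow_succ']; rfl
      rw [hp, hWδ ((δ ^ n) F), ih, map_smul]
      push_cast
      module
  -- commutation of δ with powers of D
  have hpowD : ∀ (m : ℕ) (w : V), (D ^ (m + 1)) w = (D ^ m) (D w) := by
    intro m w; rw [pow_succ]; rfl
  have hcomm : ∀ (n : ℕ) (v : V), δ ((D ^ (n + 1)) v) =
      (D ^ (n + 1)) (δ v) + ((n : ℂ) + 1) • (D ^ n) (W v)
        + (((n : ℂ) + 1) * n) • (D ^ n) v := by
    intro n
    induction n with
    | zero =>
      intro v
      simp [hδD v]
    | succ n ih =>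
      intro v
      rw [hpowD (n + 1) v, ih (D v), hδD v, hWD v, map_add, map_add, map_add,
        ← hpowD (n + 1) (δ v), ← hpowD n (W v), ← hpowD n v]
      push_cast
      module
  -- per-term computation
  have hterm : ∀ j : ℕ, δ ((D ^ (j + 1)) ((δ ^ (j + 1)) F)) =
      (D ^ (j + 1)) ((δ ^ (j + 2)) F)
        + (((j : ℂ) + 1) * ((k : ℂ) - (j : ℂ) - 2)) • (D ^ j) ((δ ^ (j + 1)) F) := by
    intro j
    have hδp : δ ((δ ^ (j + 1)) F) = (δ ^ (j + 2)) F := by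
      rw [show (δ ^ (j + 2) : Module.End ℂ V) = δ * δ ^ (j + 1) from pow_succ' δ (j + 1),
        Module.End.mul_apply]
    rw [hcomm j ((δ ^ (j + 1)) F), hWn (j + 1), hδp, map_smul]
    push_cast
    module
  -- nonvanishing of risingC
  have hRpos : ∀ j : ℕ, j + 2 ≤ k → risingC ((k : ℂ) - j - 1) j ≠ 0 := by
    intro j hj
    unfold risingC
    rw [Finset.prod_ne_zero_iff]
    intro i _
    have hcast : (k : ℂ) - j - 1 + i = ((k - (j + 1) + i : ℕ) : ℂ) := by
      rw [Nat.cast_add, Nat.cast_sub (by omega : j + 1 ≤ k)]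
      push_cast
      ring
    rw [hcast]
    exact Nat.cast_ne_zero.mpr (by omega)
  have hRstep : ∀ j : ℕ, risingC ((k : ℂ) - (j + 1) - 1) (j + 1) =
      ((k : ℂ) - j - 2) * risingC ((k : ℂ) - j - 1) j := by
    intro j
    unfold risingC
    rw [Finset.prod_range_succ']
    rw [mul_comm]
    congr 1
    · push_cast; ring
    · apply Finset.prod_congr rfl
      intro i _
      push_cast
      ring
  -- coefficient identity
  have hcoef : ∀ j : ℕ, j + 1 ≤ k / 2 →
      ccoef k (j + 1) * (((j : ℂ) + 1) * ((k : ℂ) - (j : ℂ) - 2)) = - ccoef k j := by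
    intro j hj
    have hkj : (k : ℂ) - (j : ℂ) - 2 ≠ 0 := by
      intro h
      have hk2 : (k : ℂ) = ((j + 2 : ℕ) : ℂ) := by push_cast; linear_combination h
      have : k = j + 2 := Nat.cast_injective hk2
      omega
    have hR : risingC ((k : ℂ) - j - 1) j ≠ 0 := hRpos j (by omega)
    have hfac : (j.factorial : ℂ) ≠ 0 := Nat.cast_ne_zero.mpr j.factorial_ne_zero
    have hj1 : ((j : ℂ) + 1) ≠ 0 := by
      exact Nat.cast_add_one_ne_zero j
    unfold ccoef
    rw [show ((j + 1 : ℕ) : ℂ) = (j : ℂ) + 1 by push_cast; ring] at *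
    rw [hRstep j, Nat.factorial_succ]
    push_cast
    rw [pow_succ]
    field_simp
  -- telescoping
  have htel : ∀ m ∈ Finset.range (k / 2 + 1),
      δ (ccoef k m • (D ^ m) ((δ ^ m) F)) = ggfun D δ F k (m + 1) - ggfun D δ F k m := by
    intro m hm
    match m with
    | 0 =>
      simp [ggfun, map_smul]
    | (j + 1) =>
      rw [map_smul, hterm j]
      show _ = ccoef k (j + 1) • (D ^ (j + 1)) ((δ ^ (j + 2)) F)
        - ccoef k j • (D ^ j) ((δ ^ (j + 1)) F)
      rw [smul_add, smul_smul, hcoef j (by simp at hm; omega)]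
      rw [neg_smul]
      abel
  constructor
  · rw [map_sum, Finset.sum_congr rfl htel, Finset.sum_range_sub]
    have hz : (δ ^ (k / 2 + 1)) F = 0 := hdepth _ (by omega)
    show ccoef k (k / 2) • (D ^ (k / 2)) ((δ ^ (k / 2 + 1)) F) - 0 = 0
    rw [hz]
    simp
  · intro hδF
    rw [Finset.sum_eq_single 0]
    · simp [ccoef, risingC]
    · intro b _ hb
      obtain ⟨j, rfl⟩ := Nat.exists_eq_succ_of_ne_zero hb
      have : (δ ^ (j + 1)) F = 0 := by
        rw [pow_succ, Module.End.mul_apply, hδF, map_zero]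
      rw [this]
      simp
    · intro h
      exact absurd (Finset.mem_range.mpr (Nat.succ_pos _)) h
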